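/- Suppose λ_0^1 > C · (∑_{n=0}^{N} λ_n^2 + ∑_{n=1}^{N} λ_n^1) (the paper's condition (2) with a = 0). Let V be a nonempty finite set of count vectors all of whose entries are at most C, and let v* ∈ V maximize f over V. Then v*(0,1) = max_{v ∈ V} v(0,1). (Any maximizer of the weighted objective fetches the maximum possible number of base layers over the preferred link; the weights enforce that minimizing base-layer skips on link 1 is the first priority.) -/

import Mathlib

/-- Under the paper's condition (2) with `a = 0`, any maximizer of the weighted
objective `f(v) = ∑_{n=0}^N (λ_n^1 v(n,1) + λ_n^2 v(n,2))` over a nonempty finite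
set `V` of count vectors (entries at most `C`) fetches the maximum possible number of
base layers over the preferred link: `v*(0,1) = max_{v ∈ V} v(0,1)`. -/
theorem maximizer_maximizes_base_layers_link1
    (C N : ℕ) (hC : 1 ≤ C)
    (lam : ℕ → ℕ → ℝ) (hlam : ∀ n, n ≤ N → 0 ≤ lam n 1 ∧ 0 ≤ lam n 2)
    (hcond : lam 0 1 > (C : ℝ) *
      ((∑ n ∈ Finset.Icc 0 N, lam n 2) + ∑ n ∈ Finset.Icc 1 N, lam n 1))
    (V : Finset (ℕ → ℕ → ℕ)) (hV : V.Nonempty)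
    (hbound : ∀ v ∈ V, ∀ n, n ≤ N → v n 1 ≤ C ∧ v n 2 ≤ C)
    (vstar : ℕ → ℕ → ℕ) (hmem : vstar ∈ V)
    (hmax : ∀ v ∈ V,
      (∑ n ∈ Finset.range (N + 1), (lam n 1 * (v n 1 : ℝ) + lam n 2 * (v n 2 : ℝ))) ≤
      (∑ n ∈ Finset.range (N + 1),
        (lam n 1 * (vstar n 1 : ℝ) + lam n 2 * (vstar n 2 : ℝ)))) :
    vstar 0 1 = V.sup' hV (fun v => v 0 1) := by
  have hsplit : ∀ g : ℕ → ℝ, ∑ n ∈ Finset.range (N+1), g n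
      = g 0 + ∑ n ∈ Finset.Icc 1 N, g n := by
    intro g
    rw [Finset.range_eq_Ico, Finset.sum_eq_sum_Ico_succ_bot (Nat.succ_pos N),
      Nat.succ_eq_add_one, Finset.Ico_add_one_right_eq_Icc]
  have hIcc0 : ∀ g : ℕ → ℝ, ∑ n ∈ Finset.Icc 0 N, g n
      = g 0 + ∑ n ∈ Finset.Icc 1 N, g n := by
    intro g
    rw [show Finset.Icc 0 N = Finset.range (N+1) by ext x; simp [Nat.lt_succ_iff]]
    exact hsplit g
  have hlam01 : 0 ≤ lam 0 1 := (hlam 0 (Nat.zero_le N)).1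
  have key : ∀ v ∈ V, v 0 1 ≤ vstar 0 1 := by
    intro v hv
    by_contra h
    push_neg at h
    have h1 : (vstar 0 1 : ℝ) + 1 ≤ (v 0 1 : ℝ) := by exact_mod_cast h
    have hSv : lam 0 1 * (v 0 1 : ℝ) ≤
        ∑ n ∈ Finset.range (N+1), (lam n 1 * (v n 1 : ℝ) + lam n 2 * (v n 2 : ℝ)) := by
      rw [hsplit]
      have hnn : 0 ≤ ∑ n ∈ Finset.Icc 1 N, (lam n 1 * (v n 1 : ℝ) + lam n 2 * (v n 2 : ℝ)) := by
        apply Finset.sum_nonneg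
        intro n hn
        rw [Finset.mem_Icc] at hn
        obtain ⟨hl1, hl2⟩ := hlam n hn.2
        exact add_nonneg (mul_nonneg hl1 (Nat.cast_nonneg _))
          (mul_nonneg hl2 (Nat.cast_nonneg _))
      have h02 : 0 ≤ lam 0 2 * (v 0 2 : ℝ) :=
        mul_nonneg (hlam 0 (Nat.zero_le N)).2 (Nat.cast_nonneg _)
      linarith
    have hSstar : ∑ n ∈ Finset.range (N+1),
          (lam n 1 * (vstar n 1 : ℝ) + lam n 2 * (vstar n 2 : ℝ)) ≤
        lam 0 1 * (vstar 0 1 : ℝ) + (C : ℝ) *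
          ((∑ n ∈ Finset.Icc 0 N, lam n 2) + ∑ n ∈ Finset.Icc 1 N, lam n 1) := by
      rw [hsplit, hIcc0]
      have hbd : ∑ n ∈ Finset.Icc 1 N, (lam n 1 * (vstar n 1 : ℝ) + lam n 2 * (vstar n 2 : ℝ))
          ≤ ∑ n ∈ Finset.Icc 1 N, ((C : ℝ) * lam n 1 + (C : ℝ) * lam n 2) := by
        apply Finset.sum_le_sum
        intro n hn
        rw [Finset.mem_Icc] at hn
        obtain ⟨hl1, hl2⟩ := hlam n hn.2
        obtain ⟨hb1, hb2⟩ := hbound vstar hmem n hn.2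
        have hc1 : (vstar n 1 : ℝ) ≤ (C : ℝ) := by exact_mod_cast hb1
        have hc2 : (vstar n 2 : ℝ) ≤ (C : ℝ) := by exact_mod_cast hb2
        nlinarith
      have h02 : lam 0 2 * (vstar 0 2 : ℝ) ≤ (C : ℝ) * lam 0 2 := by
        obtain ⟨hb1, hb2⟩ := hbound vstar hmem 0 (Nat.zero_le N)
        have hc2 : (vstar 0 2 : ℝ) ≤ (C : ℝ) := by exact_mod_cast hb2
        nlinarith [(hlam 0 (Nat.zero_le N)).2]
      have hbd2 : ∑ n ∈ Finset.Icc 1 N, ((C:ℝ) * lam n 1 + (C:ℝ) * lam n 2)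
          = (C:ℝ) * ∑ n ∈ Finset.Icc 1 N, lam n 1 + (C:ℝ) * ∑ n ∈ Finset.Icc 1 N, lam n 2 := by
        rw [Finset.sum_add_distrib, Finset.mul_sum, Finset.mul_sum]
      rw [hbd2] at hbd
      ring_nf at hbd h02 ⊢
      linarith
    have hchain := hmax v hv
    nlinarith
  refine le_antisymm (Finset.le_sup' (fun v => v 0 1) hmem) (Finset.sup'_le hV _ key)
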